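/- arXiv:2501.16996 — 5 statements merged into one kernel-verified Lean document; each statement's English description precedes it below -/
import Mathlib

section
/- Let k be a positive integer, σ > 0, and let Z be a random vector in ℝ^k with independent coordinates each distributed as a real Gaussian with mean 0 and variance 2σ². Then E[‖Z‖ · 1{‖Z‖ ≤ 1}] / P(‖Z‖ ≤ 1) = I1_k(σ) / I2_k(σ), where I1_k(σ) := ∫₀¹ r^k exp(−r²/(4σ²)) dr and I2_k(σ) := ∫₀¹ r^{k−1} exp(−r²/(4σ²)) dr. In other words, the conditional expectation of ‖Z‖ given the event {‖Z‖ ≤ 1} equals this ratio of integrals. -/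
open MeasureTheory ProbabilityTheory Real Set
open scoped ENNReal NNReal

/-- The Gaussian measure `N(0, v·I_k)` on `ℝ^k`: independent coordinates, each a real
Gaussian with mean `0` and variance `v`. -/
noncomputable def gaussianVec (k : ℕ) (v : ℝ) : Measure (EuclideanSpace ℝ (Fin k)) :=
  (MeasureTheory.Measure.pi fun _ : Fin k => gaussianReal 0 v.toNNReal).map
    (MeasurableEquiv.toLp 2 (Fin k → ℝ))


lemma aux_map_withDensity {α β : Type*} [MeasurableSpace α] [MeasurableSpace β]
    (e : α ≃ᵐ β) (μ : Measure α) (f : β → ℝ≥0∞) (hf : Measurable f) :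
    (μ.withDensity fun a => f (e a)).map e = (μ.map e).withDensity f := by
  ext s hs
  rw [Measure.map_apply e.measurable hs, withDensity_apply _ (e.measurable hs),
    withDensity_apply _ hs, setLIntegral_map hs hf e.measurable]

lemma aux_pi_withDensity {k : ℕ} (g : Fin k → ℝ → ℝ) (hm : ∀ i, Measurable (g i))
    (hnn : ∀ i x, 0 ≤ g i x) (hint : ∀ i, Integrable (g i)) :
    (Measure.pi fun i : Fin k => (volume : Measure ℝ).withDensity fun x => ENNReal.ofReal (g i x))
      = (Measure.pi fun _ : Fin k => (volume : Measure ℝ)).withDensity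
          fun y => ENNReal.ofReal (∏ i, g i (y i)) := by
  refine Measure.pi_eq fun s hs => ?_
  rw [withDensity_apply _ (MeasurableSet.univ_pi hs),
    ← lintegral_indicator (MeasurableSet.univ_pi hs)]
  have h1 : ∀ y : Fin k → ℝ,
      (Set.pi univ s).indicator (fun y => ENNReal.ofReal (∏ i, g i (y i))) y
        = ENNReal.ofReal (∏ i, (s i).indicator (g i) (y i)) := by
    intro y
    by_cases hy : y ∈ Set.pi univ s
    · rw [indicator_of_mem hy]
      congr 1
      exact Finset.prod_congr rfl fun i _ =>
        (indicator_of_mem (hy i (Set.mem_univ i)) _).symm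
    · rw [indicator_of_notMem hy]
      rw [Set.mem_univ_pi] at hy
      push_neg at hy
      obtain ⟨i, hi⟩ := hy
      rw [Finset.prod_eq_zero (Finset.mem_univ i) (indicator_of_notMem hi _),
        ENNReal.ofReal_zero]
  simp only [h1]
  have hU : Integrable (fun y : Fin k → ℝ => ∏ i, (s i).indicator (g i) (y i))
      (Measure.pi fun _ => volume) := by
    rw [← volume_pi]
    exact Integrable.fintype_prod fun i => (hint i).indicator (hs i)
  rw [← ofReal_integral_eq_lintegral_ofReal hU (Filter.Eventually.of_forall fun y =>
      Finset.prod_nonneg fun i _ => indicator_nonneg (fun x _ => hnn i x) _)]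
  have : ∫ y, ∏ i, (s i).indicator (g i) (y i) ∂(Measure.pi fun _ : Fin k => volume)
      = ∏ i, ∫ x, (s i).indicator (g i) x := by
    rw [← volume_pi]
    exact integral_fintype_prod_eq_prod fun i => (s i).indicator (g i)
  rw [this, ENNReal.ofReal_prod_of_nonneg fun i _ => integral_nonneg
    (indicator_nonneg fun x _ => hnn i x)]
  refine Finset.prod_congr rfl fun i _ => ?_
  rw [withDensity_apply _ (hs i), integral_indicator (hs i),
    ofReal_integral_eq_lintegral_ofReal ((hint i).integrableOn)
      (Filter.Eventually.of_forall fun x => hnn i x)]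


lemma aux_gaussianVec_eq (k : ℕ) (v : ℝ) (hv : 0 < v) :
    gaussianVec k v = (volume : Measure (EuclideanSpace ℝ (Fin k))).withDensity
      fun x => ENNReal.ofReal
        ((Real.sqrt (2 * π * v))⁻¹ ^ k * Real.exp (-‖x‖ ^ 2 / (2 * v))) := by
  have hv0 : v.toNNReal ≠ 0 := by
    simp [Real.toNNReal_eq_zero, not_le, hv]
  have hvc : ((v.toNNReal : ℝ≥0) : ℝ) = v := Real.coe_toNNReal _ hv.le
  have hpi : (Measure.pi fun _ : Fin k => gaussianReal 0 v.toNNReal)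
      = (Measure.pi fun _ : Fin k => (volume : Measure ℝ)).withDensity
          fun y => ENNReal.ofReal (∏ i, gaussianPDFReal 0 v.toNNReal (y i)) := by
    have : (fun _ : Fin k => gaussianReal 0 v.toNNReal)
        = fun _ : Fin k => (volume : Measure ℝ).withDensity
            fun x => ENNReal.ofReal (gaussianPDFReal 0 v.toNNReal x) := by
      funext i
      rw [gaussianReal_of_var_ne_zero 0 hv0]
      rfl
    rw [this]
    exact aux_pi_withDensity _ (fun i => measurable_gaussianPDFReal 0 v.toNNReal)
      (fun i x => gaussianPDFReal_nonneg 0 v.toNNReal x)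
      (fun i => integrable_gaussianPDFReal 0 v.toNNReal)
  have hmap : (Measure.pi fun _ : Fin k => (volume : Measure ℝ)).map
      (MeasurableEquiv.toLp 2 (Fin k → ℝ))
      = (volume : Measure (EuclideanSpace ℝ (Fin k))) := by
    rw [← volume_pi]
    exact ((EuclideanSpace.volume_preserving_symm_measurableEquiv_toLp (Fin k)).symm _).map_eq
  have hdens : ∀ x : EuclideanSpace ℝ (Fin k),
      ∏ i, gaussianPDFReal 0 v.toNNReal (x i)
        = (Real.sqrt (2 * π * v))⁻¹ ^ k * Real.exp (-‖x‖ ^ 2 / (2 * v)) := by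
    intro x
    have hnorm : ‖x‖ ^ 2 = ∑ i, (x i) ^ 2 := by
      rw [EuclideanSpace.norm_eq, Real.sq_sqrt (Finset.sum_nonneg fun i _ => sq_nonneg _)]
      simp [sq_abs]
    simp only [gaussianPDFReal, sub_zero, hvc]
    rw [Finset.prod_mul_distrib, Finset.prod_const, Finset.card_univ, Fintype.card_fin,
      ← Real.exp_sum, hnorm]
    congr 1
    rw [← Finset.sum_div, ← Finset.sum_neg_distrib]
  set f : EuclideanSpace ℝ (Fin k) → ℝ≥0∞ := fun x => ENNReal.ofReal
      ((Real.sqrt (2 * π * v))⁻¹ ^ k * Real.exp (-‖x‖ ^ 2 / (2 * v))) with hf_def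
  have hfm : Measurable f := by
    apply Measurable.ennreal_ofReal
    fun_prop
  have key := aux_map_withDensity (MeasurableEquiv.toLp 2 (Fin k → ℝ))
    (Measure.pi fun _ : Fin k => (volume : Measure ℝ)) f hfm
  rw [hmap] at key
  have hDf : (fun y : Fin k → ℝ => ENNReal.ofReal (∏ i, gaussianPDFReal 0 v.toNNReal (y i)))
      = fun y => f ((MeasurableEquiv.toLp 2 (Fin k → ℝ)) y) := by
    funext y
    rw [hf_def]
    simp only
    rw [← hdens ((MeasurableEquiv.toLp 2 (Fin k → ℝ)) y)]
    rfl
  rw [gaussianVec, hpi, hDf, key]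

lemma aux_gaussian_radial (k : ℕ) (hk : 0 < k) (v : ℝ) (hv : 0 < v) (F : ℝ → ℝ)
    (hF : Measurable F) :
    ∫ x, F ‖x‖ ∂(gaussianVec k v)
      = ((k : ℝ) * (volume (Metric.ball (0 : EuclideanSpace ℝ (Fin k)) 1)).toReal
          * (Real.sqrt (2 * π * v))⁻¹ ^ k)
        * ∫ r in Ioi (0:ℝ), r ^ (k - 1) * (Real.exp (-r ^ 2 / (2 * v)) * F r) := by
  haveI : Nontrivial (EuclideanSpace ℝ (Fin k)) :=
    Module.nontrivial_of_finrank_pos (R := ℝ) (by rw [finrank_euclideanSpace_fin]; exact hk)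
  set c : ℝ := (Real.sqrt (2 * π * v))⁻¹ ^ k with hc
  have hc0 : 0 ≤ c := by positivity
  rw [aux_gaussianVec_eq k v hv]
  have h1 : ∫ x, F ‖x‖ ∂((volume : Measure (EuclideanSpace ℝ (Fin k))).withDensity
        fun x => ENNReal.ofReal (c * Real.exp (-‖x‖ ^ 2 / (2 * v))))
      = ∫ x : EuclideanSpace ℝ (Fin k),
          ((c * Real.exp (-‖x‖ ^ 2 / (2 * v))).toNNReal : ℝ≥0) • F ‖x‖ ∂volume := by
    exact integral_withDensity_eq_integral_smul
      (by fun_prop : Measurable fun x : EuclideanSpace ℝ (Fin k) =>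
        (c * Real.exp (-‖x‖ ^ 2 / (2 * v))).toNNReal) _
  rw [h1]
  have h2 : ∀ x : EuclideanSpace ℝ (Fin k),
      ((c * Real.exp (-‖x‖ ^ 2 / (2 * v))).toNNReal : ℝ≥0) • F ‖x‖
        = (fun r => c * Real.exp (-r ^ 2 / (2 * v)) * F r) ‖x‖ := by
    intro x
    simp only [NNReal.smul_def, Real.coe_toNNReal _ (by positivity : (0:ℝ) ≤ c * Real.exp (-‖x‖ ^ 2 / (2 * v))), smul_eq_mul]
  simp_rw [h2]
  rw [MeasureTheory.integral_fun_norm_addHaar (volume : Measure (EuclideanSpace ℝ (Fin k)))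
    (fun r => c * Real.exp (-r ^ 2 / (2 * v)) * F r)]
  simp only [finrank_euclideanSpace_fin, nsmul_eq_mul, smul_eq_mul]
  have h3 : ∫ r in Ioi (0:ℝ), r ^ (k - 1) * (c * Real.exp (-r ^ 2 / (2 * v)) * F r)
      = c * ∫ r in Ioi (0:ℝ), r ^ (k - 1) * (Real.exp (-r ^ 2 / (2 * v)) * F r) := by
    rw [← integral_const_mul]
    congr 1
    funext r
    ring
  rw [h3, measureReal_def]
  ring


/-- If `Z ~ N(0, 2σ² I_k)` in `ℝ^k`, then
`E[‖Z‖·1{‖Z‖ ≤ 1}]/P(‖Z‖ ≤ 1) = (∫₀¹ r^k e^{−r²/(4σ²)} dr)/(∫₀¹ r^{k−1} e^{−r²/(4σ²)} dr)`. -/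
theorem conditional_norm_gaussian_eq_ratio
    (k : ℕ) (hk : 0 < k) (σ : ℝ) (hσ : 0 < σ)
    {Ω : Type*} [MeasurableSpace Ω] (P : Measure Ω) [IsProbabilityMeasure P]
    (Z : Ω → EuclideanSpace ℝ (Fin k)) (hZmeas : Measurable Z)
    (hZlaw : Measure.map Z P = gaussianVec k (2 * σ ^ 2)) :
    (∫ ω in {ω | ‖Z ω‖ ≤ 1}, ‖Z ω‖ ∂P) / (P {ω | ‖Z ω‖ ≤ 1}).toReal =
      (∫ r in (0:ℝ)..1, r ^ k * Real.exp (-r ^ 2 / (4 * σ ^ 2))) /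
        (∫ r in (0:ℝ)..1, r ^ (k - 1) * Real.exp (-r ^ 2 / (4 * σ ^ 2))) := by
  have hv : (0:ℝ) < 2 * σ ^ 2 := by positivity
  set v : ℝ := 2 * σ ^ 2 with hvdef
  set T : Set (EuclideanSpace ℝ (Fin k)) := {x | ‖x‖ ≤ 1} with hT_def
  have hT : MeasurableSet T := measurableSet_le (by fun_prop) measurable_const
  have hpre : {ω | ‖Z ω‖ ≤ 1} = Z ⁻¹' T := rfl
  set F₁ : ℝ → ℝ := fun r => if r ≤ 1 then r else 0 with hF1
  set F₂ : ℝ → ℝ := fun r => if r ≤ 1 then 1 else 0 with hF2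
  have hF1m : Measurable F₁ :=
    Measurable.ite (measurableSet_le measurable_id measurable_const)
      measurable_id measurable_const
  have hF2m : Measurable F₂ :=
    Measurable.ite (measurableSet_le measurable_id measurable_const)
      measurable_const measurable_const
  have hnum : ∫ ω in {ω | ‖Z ω‖ ≤ 1}, ‖Z ω‖ ∂P
      = ∫ x, F₁ ‖x‖ ∂(gaussianVec k v) := by
    rw [hpre, ← setIntegral_map hT (by fun_prop) hZmeas.aemeasurable, hZlaw,
      ← integral_indicator hT]
    refine integral_congr_ae (Filter.Eventually.of_forall fun x => ?_)
    by_cases hx : ‖x‖ ≤ 1 <;> simp [hF1, hT_def, Set.indicator, hx]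
  have hden : (P {ω | ‖Z ω‖ ≤ 1}).toReal = ∫ x, F₂ ‖x‖ ∂(gaussianVec k v) := by
    rw [hpre, ← Measure.map_apply hZmeas hT, hZlaw, ← measureReal_def, ← integral_indicator_one hT]
    refine integral_congr_ae (Filter.Eventually.of_forall fun x => ?_)
    by_cases hx : ‖x‖ ≤ 1 <;> simp [hF2, hT_def, Set.indicator, hx]
  rw [hnum, hden, aux_gaussian_radial k hk v hv F₁ hF1m,
    aux_gaussian_radial k hk v hv F₂ hF2m]
  have h2v : 2 * v = 4 * σ ^ 2 := by rw [hvdef]; ring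
  have hI1 : ∫ r in Ioi (0:ℝ), r ^ (k - 1) * (Real.exp (-r ^ 2 / (2 * v)) * F₁ r)
      = ∫ r in (0:ℝ)..1, r ^ k * Real.exp (-r ^ 2 / (4 * σ ^ 2)) := by
    rw [intervalIntegral.integral_of_le zero_le_one]
    have hpt : ∀ r : ℝ, r ^ (k - 1) * (Real.exp (-r ^ 2 / (2 * v)) * F₁ r)
        = (Iic (1:ℝ)).indicator (fun r => r ^ k * Real.exp (-r ^ 2 / (4 * σ ^ 2))) r := by
      intro r
      by_cases hr : r ≤ 1
      · rw [indicator_of_mem (mem_Iic.mpr hr)]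
        have hpow : r ^ k = r ^ (k - 1) * r := by
          conv_lhs => rw [← Nat.sub_add_cancel hk]
          rw [pow_succ]
        rw [hpow, ← h2v]
        simp only [hF1, if_pos hr]
        ring
      · rw [indicator_of_notMem (by simpa using hr)]
        simp [hF1, hr]
    simp_rw [hpt]
    rw [setIntegral_indicator measurableSet_Iic, Ioi_inter_Iic]
  have hI2 : ∫ r in Ioi (0:ℝ), r ^ (k - 1) * (Real.exp (-r ^ 2 / (2 * v)) * F₂ r)
      = ∫ r in (0:ℝ)..1, r ^ (k - 1) * Real.exp (-r ^ 2 / (4 * σ ^ 2)) := by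
    rw [intervalIntegral.integral_of_le zero_le_one]
    have hpt : ∀ r : ℝ, r ^ (k - 1) * (Real.exp (-r ^ 2 / (2 * v)) * F₂ r)
        = (Iic (1:ℝ)).indicator (fun r => r ^ (k - 1) * Real.exp (-r ^ 2 / (4 * σ ^ 2))) r := by
      intro r
      by_cases hr : r ≤ 1
      · rw [indicator_of_mem (mem_Iic.mpr hr), ← h2v]
        simp [hF2, if_pos hr]
      · rw [indicator_of_notMem (by simpa using hr)]
        simp [hF2, hr]
    simp_rw [hpt]
    rw [setIntegral_indicator measurableSet_Iic, Ioi_inter_Iic]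
  rw [hI1, hI2]
  have hsqrt : (0:ℝ) < Real.sqrt (2 * π * v) := Real.sqrt_pos.mpr (by positivity)
  have hball : (0:ℝ) < (volume (Metric.ball (0 : EuclideanSpace ℝ (Fin k)) 1)).toReal :=
    ENNReal.toReal_pos (Metric.measure_ball_pos _ _ one_pos).ne' measure_ball_lt_top.ne
  exact mul_div_mul_left _ _
    (mul_ne_zero (mul_ne_zero (Nat.cast_ne_zero.mpr hk.ne') hball.ne')
      (pow_ne_zero _ (inv_ne_zero hsqrt.ne')))
end

section
/- Fix σ > 0 and for each positive integer k define I1_k(σ) := ∫₀¹ r^k exp(−r²/(4σ²)) dr. Then I1_k(σ) = exp(−1/(4σ²))/(k+1) + o(1/k) as k → ∞; that is, lim_{k→∞} k·( I1_k(σ) − exp(−1/(4σ²))/(k+1) ) = 0. Likewise, ∫₀¹ r^{k−1} exp(−r²/(4σ²)) dr = exp(−1/(4σ²))/k + o(1/k) as k → ∞. -/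
open Real Filter

/-- `I1_k(σ) := ∫₀¹ r^k exp(−r²/(4σ²)) dr`. -/
noncomputable def I1 (k : ℕ) (σ : ℝ) : ℝ :=
  ∫ r in (0:ℝ)..1, r ^ k * Real.exp (-r ^ 2 / (4 * σ ^ 2))

/-- `I2_k(σ) := ∫₀¹ r^{k−1} exp(−r²/(4σ²)) dr`. -/
noncomputable def I2 (k : ℕ) (σ : ℝ) : ℝ :=
  ∫ r in (0:ℝ)..1, r ^ (k - 1) * Real.exp (-r ^ 2 / (4 * σ ^ 2))

noncomputable def J (σ : ℝ) (n : ℕ) : ℝ :=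
  ∫ r in (0:ℝ)..1, r ^ n * (Real.exp (-r ^ 2 / (4 * σ ^ 2)) - Real.exp (-1 / (4 * σ ^ 2)))

lemma J_nonneg (σ : ℝ) (hσ : 0 < σ) (n : ℕ) : 0 ≤ J σ n := by
  apply intervalIntegral.integral_nonneg (by norm_num)
  intro r hr
  have h1 : 0 ≤ r := hr.1
  have h2 : r ≤ 1 := hr.2
  have : Real.exp (-1 / (4 * σ ^ 2)) ≤ Real.exp (-r ^ 2 / (4 * σ ^ 2)) := by
    apply Real.exp_le_exp.2
    apply div_le_div_of_nonneg_right ?_ (by positivity)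
    nlinarith
  exact mul_nonneg (pow_nonneg h1 n) (sub_nonneg.2 this)

lemma J_le (σ : ℝ) (hσ : 0 < σ) (n : ℕ) :
    J σ n ≤ (1 / (n + 1) - 1 / (n + 2)) * (1 / (2 * σ ^ 2)) := by
  have hcont : ∀ m : ℕ, Continuous fun r : ℝ => r ^ m * Real.exp (-r ^ 2 / (4 * σ ^ 2)) := by
    intro m; fun_prop
  have hint : (∫ r in (0:ℝ)..1, (r ^ n - r ^ (n + 1)) * (1 / (2 * σ ^ 2)))
      = (1 / (n + 1) - 1 / (n + 2)) * (1 / (2 * σ ^ 2)) := by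
    rw [intervalIntegral.integral_mul_const,
      intervalIntegral.integral_sub (intervalIntegral.intervalIntegrable_pow n)
        (intervalIntegral.intervalIntegrable_pow (n + 1)),
      integral_pow, integral_pow]
    push_cast
    norm_num
    left; ring
  rw [← hint]
  apply intervalIntegral.integral_mono_on (by norm_num)
  · apply Continuous.intervalIntegrable; fun_prop
  · apply Continuous.intervalIntegrable; fun_prop
  · intro r hr
    have h1 : 0 ≤ r := hr.1
    have h2 : r ≤ 1 := hr.2
    have hrn : (0:ℝ) ≤ r ^ n := by positivity
    have key : Real.exp (-r ^ 2 / (4 * σ ^ 2)) - Real.exp (-1 / (4 * σ ^ 2))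
        ≤ (1 - r) * (1 / (2 * σ ^ 2)) := by
      set a : ℝ := -r ^ 2 / (4 * σ ^ 2) with ha
      set b : ℝ := -1 / (4 * σ ^ 2) with hb
      have hba : b ≤ a := by
        apply div_le_div_of_nonneg_right ?_ (by positivity)
        nlinarith
      have ha0 : a ≤ 0 := by
        apply div_nonpos_of_nonpos_of_nonneg (by nlinarith) (by positivity)
      have h3 : Real.exp a + Real.exp a * (b - a) ≤ Real.exp b := by
        have := Real.add_one_le_exp (b - a)
        have hpos : 0 < Real.exp a := Real.exp_pos a
        calc Real.exp a + Real.exp a * (b - a) = Real.exp a * (1 + (b - a)) := by ring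
          _ ≤ Real.exp a * Real.exp (b - a) := by
              apply mul_le_mul_of_nonneg_left _ hpos.le
              linarith
          _ = Real.exp b := by rw [← Real.exp_add]; ring_nf
      have h4 : Real.exp a - Real.exp b ≤ Real.exp a * (a - b) := by linarith
      have h5 : Real.exp a * (a - b) ≤ a - b := by
        apply mul_le_of_le_one_left (by linarith)
        exact Real.exp_le_one_iff.2 ha0
      have h6 : a - b = (1 - r ^ 2) / (4 * σ ^ 2) := by
        rw [ha, hb]; ring
      have h7 : (1 - r ^ 2) / (4 * σ ^ 2) ≤ (1 - r) * (1 / (2 * σ ^ 2)) := by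
        have hs : (0:ℝ) < σ ^ 2 := by positivity
        rw [mul_one_div, div_le_div_iff₀ (by positivity) (by positivity)]
        nlinarith [mul_nonneg (sq_nonneg (1 - r)) hs.le]
      linarith
    calc r ^ n * (Real.exp (-r ^ 2 / (4 * σ ^ 2)) - Real.exp (-1 / (4 * σ ^ 2)))
        ≤ r ^ n * ((1 - r) * (1 / (2 * σ ^ 2))) := by
          apply mul_le_mul_of_nonneg_left key hrn
      _ = (r ^ n - r ^ (n + 1)) * (1 / (2 * σ ^ 2)) := by ring

lemma I1_eq (σ : ℝ) (hσ : 0 < σ) (n : ℕ) :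
    I1 n σ = J σ n + Real.exp (-1 / (4 * σ ^ 2)) / (n + 1) := by
  have h1 : IntervalIntegrable (fun r : ℝ => r ^ n * Real.exp (-r ^ 2 / (4 * σ ^ 2)))
      MeasureTheory.volume 0 1 := by apply Continuous.intervalIntegrable; fun_prop
  have h2 : IntervalIntegrable (fun r : ℝ => r ^ n * Real.exp (-1 / (4 * σ ^ 2)))
      MeasureTheory.volume 0 1 := by apply Continuous.intervalIntegrable; fun_prop
  have : J σ n = I1 n σ - ∫ r in (0:ℝ)..1, r ^ n * Real.exp (-1 / (4 * σ ^ 2)) := by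
    rw [I1, J, ← intervalIntegral.integral_sub h1 h2]
    congr 1; ext r; ring
  rw [this, intervalIntegral.integral_mul_const, integral_pow]
  push_cast
  norm_num
  ring

/-- `I1_k(σ) = e^{−1/(4σ²)}/(k+1) + o(1/k)` and `I2_k(σ) = e^{−1/(4σ²)}/k + o(1/k)`
as `k → ∞`. -/
theorem integral_asymptotics (σ : ℝ) (hσ : 0 < σ) :
    Tendsto (fun k : ℕ =>
        (k : ℝ) * (I1 k σ - Real.exp (-1 / (4 * σ ^ 2)) / ((k : ℝ) + 1)))
      atTop (nhds 0) ∧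
    Tendsto (fun k : ℕ =>
        (k : ℝ) * (I2 k σ - Real.exp (-1 / (4 * σ ^ 2)) / (k : ℝ)))
      atTop (nhds 0) := by
  have hC : (0:ℝ) < 1 / (2 * σ ^ 2) := by positivity
  set C : ℝ := 1 / (2 * σ ^ 2) with hCdef
  have hg : Tendsto (fun k : ℕ => C * (1 / ((k : ℝ) + 1))) atTop (nhds 0) := by
    have := tendsto_one_div_add_atTop_nhds_zero_nat.const_mul C
    simpa using this
  constructor
  · apply squeeze_zero (g := fun k : ℕ => C * (1 / ((k : ℝ) + 1))) ?_ ?_ hg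
    · intro k
      have := J_nonneg σ hσ k
      have hk : (0:ℝ) ≤ (k:ℝ) := Nat.cast_nonneg k
      rw [I1_eq σ hσ k]
      nlinarith
    · intro k
      rw [I1_eq σ hσ k]
      have hJ := J_le σ hσ k
      have hk : (0:ℝ) ≤ (k:ℝ) := Nat.cast_nonneg k
      have step : (k:ℝ) * (1 / ((k:ℝ) + 1) - 1 / ((k:ℝ) + 2)) ≤ 1 / ((k:ℝ) + 1) := by
        have h1 : (0:ℝ) < (k:ℝ) + 1 := by positivity
        have h2 : (0:ℝ) < (k:ℝ) + 2 := by positivity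
        have heq : (k:ℝ) * (1 / ((k:ℝ) + 1) - 1 / ((k:ℝ) + 2)) = (k:ℝ) / (((k:ℝ) + 1) * ((k:ℝ) + 2)) := by
          field_simp; ring
        rw [heq, div_le_div_iff₀ (by positivity) h1]
        nlinarith
      calc (k:ℝ) * (J σ k + Real.exp (-1 / (4 * σ ^ 2)) / (↑k + 1)
              - Real.exp (-1 / (4 * σ ^ 2)) / (↑k + 1))
          = (k:ℝ) * J σ k := by ring
        _ ≤ (k:ℝ) * ((1 / ((k:ℝ) + 1) - 1 / ((k:ℝ) + 2)) * C) := by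
            apply mul_le_mul_of_nonneg_left hJ hk
        _ = ((k:ℝ) * (1 / ((k:ℝ) + 1) - 1 / ((k:ℝ) + 2))) * C := by ring
        _ ≤ (1 / ((k:ℝ) + 1)) * C := by
            apply mul_le_mul_of_nonneg_right step hC.le
        _ = C * (1 / ((k:ℝ) + 1)) := by ring
  · apply squeeze_zero (g := fun k : ℕ => C * (1 / ((k : ℝ) + 1))) ?_ ?_ hg
    · intro k
      rcases Nat.eq_zero_or_pos k with hk0 | hk1
      · simp [hk0]
      · have hI2 : I2 k σ = I1 (k - 1) σ := rfl
        have hkc : ((k - 1 : ℕ) : ℝ) + 1 = (k : ℝ) := by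
          rw [Nat.cast_pred hk1]; ring
        rw [hI2, I1_eq σ hσ (k - 1), hkc]
        have := J_nonneg σ hσ (k - 1)
        have hk : (0:ℝ) ≤ (k:ℝ) := Nat.cast_nonneg k
        nlinarith
    · intro k
      rcases Nat.eq_zero_or_pos k with hk0 | hk1
      · simp [hk0]; positivity
      · have hI2 : I2 k σ = I1 (k - 1) σ := rfl
        have hkc : ((k - 1 : ℕ) : ℝ) + 1 = (k : ℝ) := by
          rw [Nat.cast_pred hk1]; ring
        rw [hI2, I1_eq σ hσ (k - 1), hkc]
        have hJ := J_le σ hσ (k - 1)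
        rw [hkc] at hJ
        have hkr : (0:ℝ) < (k:ℝ) := by exact_mod_cast hk1
        have hkc2 : ((k - 1 : ℕ) : ℝ) + 2 = (k : ℝ) + 1 := by
          rw [Nat.cast_pred hk1]; ring
        rw [hkc2] at hJ
        have step : (k:ℝ) * (1 / (k:ℝ) - 1 / ((k:ℝ) + 1)) ≤ 1 / ((k:ℝ) + 1) := by
          have h1 : (0:ℝ) < (k:ℝ) + 1 := by positivity
          have heq : (k:ℝ) * (1 / (k:ℝ) - 1 / ((k:ℝ) + 1)) = (k:ℝ) / ((k:ℝ) * ((k:ℝ) + 1)) := by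
            field_simp; ring
          rw [heq, div_le_div_iff₀ (by positivity) h1]
          nlinarith
        calc (k:ℝ) * (J σ (k-1) + Real.exp (-1 / (4 * σ ^ 2)) / (k:ℝ)
                - Real.exp (-1 / (4 * σ ^ 2)) / (k:ℝ))
            = (k:ℝ) * J σ (k-1) := by ring
          _ ≤ (k:ℝ) * ((1 / (k:ℝ) - 1 / ((k:ℝ) + 1)) * C) := by
              apply mul_le_mul_of_nonneg_left hJ hkr.le
          _ = ((k:ℝ) * (1 / (k:ℝ) - 1 / ((k:ℝ) + 1))) * C := by ring
          _ ≤ (1 / ((k:ℝ) + 1)) * C := by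
              apply mul_le_mul_of_nonneg_right step hC.le
          _ = C * (1 / ((k:ℝ) + 1)) := by ring
end

section
/- For every positive integer k and every σ > 0, ∫₀¹ r^k exp(−r²/(4σ²)) dr / ∫₀¹ r^{k−1} exp(−r²/(4σ²)) dr < k/(k+1). -/
open Real MeasureTheory

set_option maxHeartbeats 1000000

lemma cont_aux (σ : ℝ) (m : ℕ) :
    Continuous fun r : ℝ => r ^ m * Real.exp (-r ^ 2 / (4 * σ ^ 2)) := by
  fun_prop

lemma Jpos (σ : ℝ) (m : ℕ) :
    0 < ∫ r in (0:ℝ)..1, r ^ m * Real.exp (-r ^ 2 / (4 * σ ^ 2)) := by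
  apply intervalIntegral.intervalIntegral_pos_of_pos_on
    ((cont_aux σ m).intervalIntegrable 0 1)
  · intro x hx
    have hx0 : 0 < x := hx.1
    positivity
  · norm_num

lemma Jrec (σ : ℝ) (hσ : 0 < σ) (m : ℕ) :
    ((m : ℝ) + 1) * ∫ r in (0:ℝ)..1, r ^ m * Real.exp (-r ^ 2 / (4 * σ ^ 2)) =
      Real.exp (-1 / (4 * σ ^ 2)) +
        (1 / (2 * σ ^ 2)) * ∫ r in (0:ℝ)..1, r ^ (m + 2) * Real.exp (-r ^ 2 / (4 * σ ^ 2)) := by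
  have hσ2 : (4 * σ ^ 2) ≠ 0 := by positivity
  have hderiv : ∀ r : ℝ,
      HasDerivAt (fun r : ℝ => r ^ (m + 1) * Real.exp (-r ^ 2 / (4 * σ ^ 2)))
        (((m : ℝ) + 1) * r ^ m * Real.exp (-r ^ 2 / (4 * σ ^ 2))
          - (1 / (2 * σ ^ 2)) * (r ^ (m + 2) * Real.exp (-r ^ 2 / (4 * σ ^ 2)))) r := by
    intro r
    have h1 : HasDerivAt (fun r : ℝ => -r ^ 2 / (4 * σ ^ 2)) (-(2 * r) / (4 * σ ^ 2)) r := by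
      have := (hasDerivAt_pow 2 r).neg.div_const (4 * σ ^ 2)
      simpa using this
    have h2 := h1.exp
    have h3 := (hasDerivAt_pow (m + 1) r).mul h2
    refine h3.congr_deriv ?_
    simp only [Nat.add_sub_cancel]
    push_cast
    ring
  have hint : IntervalIntegrable
      (fun r : ℝ => ((m : ℝ) + 1) * r ^ m * Real.exp (-r ^ 2 / (4 * σ ^ 2))
        - (1 / (2 * σ ^ 2)) * (r ^ (m + 2) * Real.exp (-r ^ 2 / (4 * σ ^ 2)))) volume 0 1 := by
    apply Continuous.intervalIntegrable
    fun_prop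
  have hFTC := intervalIntegral.integral_eq_sub_of_hasDerivAt
    (fun r _ => hderiv r) hint
  have hsub : (∫ r in (0:ℝ)..1,
      (((m : ℝ) + 1) * r ^ m * Real.exp (-r ^ 2 / (4 * σ ^ 2))
        - (1 / (2 * σ ^ 2)) * (r ^ (m + 2) * Real.exp (-r ^ 2 / (4 * σ ^ 2)))))
      = ((m : ℝ) + 1) * (∫ r in (0:ℝ)..1, r ^ m * Real.exp (-r ^ 2 / (4 * σ ^ 2)))
        - (1 / (2 * σ ^ 2)) * ∫ r in (0:ℝ)..1, r ^ (m + 2) * Real.exp (-r ^ 2 / (4 * σ ^ 2)) := by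
    rw [intervalIntegral.integral_sub]
    · simp only [mul_assoc]
      rw [intervalIntegral.integral_const_mul, intervalIntegral.integral_const_mul]
    · apply Continuous.intervalIntegrable; fun_prop
    · apply Continuous.intervalIntegrable; fun_prop
  rw [hsub] at hFTC
  have : (1:ℝ) ^ (m+1) * Real.exp (-1 ^ 2 / (4 * σ ^ 2))
    - (0:ℝ) ^ (m+1) * Real.exp (-0 ^ 2 / (4 * σ ^ 2)) = Real.exp (-1 / (4 * σ ^ 2)) := by
    norm_num
  rw [this] at hFTC
  linarith

lemma Jmono (σ : ℝ) (m : ℕ) :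
    (∫ r in (0:ℝ)..1, r ^ (m + 1) * Real.exp (-r ^ 2 / (4 * σ ^ 2))) <
      ∫ r in (0:ℝ)..1, r ^ m * Real.exp (-r ^ 2 / (4 * σ ^ 2)) := by
  apply intervalIntegral.integral_lt_integral_of_continuousOn_of_le_of_exists_lt
    (by norm_num) (cont_aux σ (m + 1)).continuousOn (cont_aux σ m).continuousOn
  · intro x hx
    have h1 : x ^ (m + 1) ≤ x ^ m := by
      apply pow_le_pow_of_le_one (le_of_lt hx.1) hx.2
      omega
    have : 0 < Real.exp (-x ^ 2 / (4 * σ ^ 2)) := Real.exp_pos _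
    nlinarith
  · refine ⟨1/2, by norm_num, ?_⟩
    have h1 : ((1:ℝ)/2) ^ (m + 1) < ((1:ℝ)/2) ^ m := by
      apply pow_lt_pow_right_of_lt_one₀ (by norm_num) (by norm_num)
      omega
    have : 0 < Real.exp (-((1:ℝ)/2) ^ 2 / (4 * σ ^ 2)) := Real.exp_pos _
    nlinarith

/-- For every positive integer `k` and `σ > 0`,
`(∫₀¹ r^k e^{−r²/(4σ²)} dr)/(∫₀¹ r^{k−1} e^{−r²/(4σ²)} dr) < k/(k+1)`. -/
theorem ratio_lt (k : ℕ) (hk : 0 < k) (σ : ℝ) (hσ : 0 < σ) :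
    (∫ r in (0:ℝ)..1, r ^ k * Real.exp (-r ^ 2 / (4 * σ ^ 2))) /
      (∫ r in (0:ℝ)..1, r ^ (k - 1) * Real.exp (-r ^ 2 / (4 * σ ^ 2))) <
      (k : ℝ) / ((k : ℝ) + 1) := by
  have hden := Jpos σ (k - 1)
  have hkpos : (0:ℝ) < (k : ℝ) + 1 := by positivity
  rw [div_lt_div_iff₀ hden hkpos]
  have hrec1 := Jrec σ hσ k
  have hrec2 := Jrec σ hσ (k - 1)
  have hk1 : k - 1 + 1 = k := by omega
  have hk2 : k - 1 + 2 = k + 1 := by omega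
  have hcast : ((k - 1 : ℕ) : ℝ) + 1 = (k : ℝ) := by
    have := congrArg (fun n : ℕ => (n : ℝ)) hk1
    push_cast at this
    linarith
  rw [hk2, hcast] at hrec2
  have hm := Jmono σ (k + 1)
  rw [show k + 1 + 1 = k + 2 from by omega] at hm
  have hc : (0:ℝ) < 1 / (2 * σ ^ 2) := by positivity
  have := mul_lt_mul_of_pos_left hm hc
  linarith
end

section
/- Fix a positive integer k. Define, for σ > 0, I1_k(σ) := ∫₀¹ r^k exp(−r²/(4σ²)) dr and I2_k(σ) := ∫₀¹ r^{k−1} exp(−r²/(4σ²)) dr. Then lim_{σ → 0⁺} I1_k(σ)/I2_k(σ) = 0. -/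
open Real Filter

namespace RatioAux

lemma contE (σ : ℝ) (n : ℕ) :
    Continuous fun r : ℝ => r ^ n * Real.exp (-r ^ 2 / (4 * σ ^ 2)) := by
  fun_prop

lemma intE (σ : ℝ) (n : ℕ) (a b : ℝ) :
    IntervalIntegrable (fun r : ℝ => r ^ n * Real.exp (-r ^ 2 / (4 * σ ^ 2)))
      MeasureTheory.volume a b :=
  (contE σ n).intervalIntegrable a b

lemma nonnegE (σ : ℝ) (n : ℕ) {r : ℝ} (hr : 0 ≤ r) :
    0 ≤ r ^ n * Real.exp (-r ^ 2 / (4 * σ ^ 2)) :=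
  mul_nonneg (pow_nonneg hr n) (Real.exp_pos _).le

lemma segment_nonneg (σ : ℝ) (n : ℕ) {a b : ℝ} (ha : 0 ≤ a) (hab : a ≤ b) :
    0 ≤ ∫ r in a..b, r ^ n * Real.exp (-r ^ 2 / (4 * σ ^ 2)) := by
  apply intervalIntegral.integral_nonneg hab
  intro r hr
  exact nonnegE σ n (le_trans ha hr.1)

lemma I2_pos (k : ℕ) (σ : ℝ) : 0 < I2 k σ := by
  apply intervalIntegral.intervalIntegral_pos_of_pos_on (intE σ (k-1) 0 1)
  · intro r hr
    exact mul_pos (pow_pos hr.1 _) (Real.exp_pos _)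
  · norm_num

lemma I1_nonneg (k : ℕ) (σ : ℝ) : 0 ≤ I1 k σ :=
  segment_nonneg σ k le_rfl zero_le_one

lemma I1_le (k : ℕ) (hk : 0 < k) {σ : ℝ} (hσ : σ ≠ 0) {a : ℝ} (ha : 0 < a) (ha1 : a ≤ 1) :
    I1 k σ ≤ a * I2 k σ + Real.exp (-a ^ 2 / (4 * σ ^ 2)) := by
  have hsplit : I1 k σ = (∫ r in (0:ℝ)..a, r ^ k * Real.exp (-r ^ 2 / (4 * σ ^ 2)))
      + ∫ r in a..1, r ^ k * Real.exp (-r ^ 2 / (4 * σ ^ 2)) :=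
    (intervalIntegral.integral_add_adjacent_intervals (intE σ k 0 a) (intE σ k a 1)).symm
  rw [hsplit]
  have h1 : (∫ r in (0:ℝ)..a, r ^ k * Real.exp (-r ^ 2 / (4 * σ ^ 2)))
      ≤ a * I2 k σ := by
    have step1 : (∫ r in (0:ℝ)..a, r ^ k * Real.exp (-r ^ 2 / (4 * σ ^ 2)))
        ≤ ∫ r in (0:ℝ)..a, a * (r ^ (k - 1) * Real.exp (-r ^ 2 / (4 * σ ^ 2))) := by
      apply intervalIntegral.integral_mono_on ha.le (intE σ k 0 a)
        ((intE σ (k-1) 0 a).const_mul a)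
      intro r hr
      have hrk : r ^ k = r ^ (k - 1) * r := by
        rw [← pow_succ, Nat.sub_add_cancel hk]
      rw [hrk]
      have : r ^ (k - 1) * r ≤ r ^ (k - 1) * a :=
        mul_le_mul_of_nonneg_left hr.2 (pow_nonneg hr.1 _)
      calc r ^ (k - 1) * r * Real.exp (-r ^ 2 / (4 * σ ^ 2))
          ≤ r ^ (k - 1) * a * Real.exp (-r ^ 2 / (4 * σ ^ 2)) :=
            mul_le_mul_of_nonneg_right this (Real.exp_pos _).le
        _ = a * (r ^ (k - 1) * Real.exp (-r ^ 2 / (4 * σ ^ 2))) := by ring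
    rw [intervalIntegral.integral_const_mul] at step1
    refine step1.trans (mul_le_mul_of_nonneg_left ?_ ha.le)
    have : I2 k σ = (∫ r in (0:ℝ)..a, r ^ (k-1) * Real.exp (-r ^ 2 / (4 * σ ^ 2)))
        + ∫ r in a..1, r ^ (k-1) * Real.exp (-r ^ 2 / (4 * σ ^ 2)) :=
      (intervalIntegral.integral_add_adjacent_intervals (intE σ (k-1) 0 a)
        (intE σ (k-1) a 1)).symm
    rw [this]
    linarith [segment_nonneg σ (k-1) ha.le ha1]
  have h2 : (∫ r in a..1, r ^ k * Real.exp (-r ^ 2 / (4 * σ ^ 2)))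
      ≤ Real.exp (-a ^ 2 / (4 * σ ^ 2)) := by
    have step : (∫ r in a..1, r ^ k * Real.exp (-r ^ 2 / (4 * σ ^ 2)))
        ≤ ∫ _ in a..1, Real.exp (-a ^ 2 / (4 * σ ^ 2)) := by
      apply intervalIntegral.integral_mono_on ha1 (intE σ k a 1)
        intervalIntegrable_const
      intro r hr
      have hr0 : 0 ≤ r := le_trans ha.le hr.1
      have hpow : r ^ k ≤ 1 := pow_le_one₀ hr0 hr.2
      have hexp : Real.exp (-r ^ 2 / (4 * σ ^ 2)) ≤ Real.exp (-a ^ 2 / (4 * σ ^ 2)) := by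
        apply Real.exp_le_exp.mpr
        have hsq : a ^ 2 ≤ r ^ 2 := by nlinarith [hr.1]
        have h4 : (0:ℝ) < 4 * σ ^ 2 := by positivity
        gcongr
      calc r ^ k * Real.exp (-r ^ 2 / (4 * σ ^ 2))
          ≤ 1 * Real.exp (-a ^ 2 / (4 * σ ^ 2)) :=
            mul_le_mul hpow hexp (Real.exp_pos _).le one_pos.le
        _ = Real.exp (-a ^ 2 / (4 * σ ^ 2)) := one_mul _
    rw [intervalIntegral.integral_const] at step
    refine step.trans ?_
    have : (1 - a) ≤ 1 := by linarith
    have hexp : (0:ℝ) ≤ Real.exp (-a ^ 2 / (4 * σ ^ 2)) := (Real.exp_pos _).le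
    rw [smul_eq_mul]
    nlinarith
  linarith

lemma I2_ge (k : ℕ) (hk : 0 < k) {σ : ℝ} (hσ : σ ≠ 0) {a : ℝ} (ha : 0 < a) (ha1 : a ≤ 1) :
    ((a / 2) ^ k / k) * Real.exp (-a ^ 2 / (16 * σ ^ 2)) ≤ I2 k σ := by
  have ha2 : a / 2 ≤ 1 := by linarith
  have hsplit : I2 k σ = (∫ r in (0:ℝ)..(a/2), r ^ (k-1) * Real.exp (-r ^ 2 / (4 * σ ^ 2)))
      + ∫ r in (a/2)..1, r ^ (k-1) * Real.exp (-r ^ 2 / (4 * σ ^ 2)) :=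
    (intervalIntegral.integral_add_adjacent_intervals (intE σ (k-1) 0 (a/2))
      (intE σ (k-1) (a/2) 1)).symm
  have htail : 0 ≤ ∫ r in (a/2)..1, r ^ (k-1) * Real.exp (-r ^ 2 / (4 * σ ^ 2)) :=
    segment_nonneg σ (k-1) (by linarith) ha2
  have hmono : (∫ r in (0:ℝ)..(a/2), r ^ (k-1) * Real.exp (-a ^ 2 / (16 * σ ^ 2)))
      ≤ ∫ r in (0:ℝ)..(a/2), r ^ (k-1) * Real.exp (-r ^ 2 / (4 * σ ^ 2)) := by
    apply intervalIntegral.integral_mono_on (by linarith)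
      (((continuous_pow (k-1)).mul continuous_const).intervalIntegrable _ _) (intE σ (k-1) 0 (a/2))
    intro r hr
    apply mul_le_mul_of_nonneg_left _ (pow_nonneg hr.1 _)
    apply Real.exp_le_exp.mpr
    have h4 : (0:ℝ) < 4 * σ ^ 2 := by positivity
    have hsq : r ^ 2 ≤ a ^ 2 / 4 := by nlinarith [hr.1, hr.2]
    rw [div_le_div_iff₀ (by positivity) h4]
    nlinarith [sq_nonneg σ]
  have hval : (∫ r in (0:ℝ)..(a/2), r ^ (k-1) * Real.exp (-a ^ 2 / (16 * σ ^ 2)))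
      = ((a / 2) ^ k / k) * Real.exp (-a ^ 2 / (16 * σ ^ 2)) := by
    have hcast : ((k - 1 : ℕ) : ℝ) + 1 = (k : ℝ) := by
      rw [← Nat.cast_add_one, Nat.sub_add_cancel hk]
    rw [intervalIntegral.integral_mul_const, integral_pow, Nat.sub_add_cancel hk,
      zero_pow hk.ne', sub_zero, hcast]
  rw [hsplit]
  rw [hval] at hmono
  linarith

lemma exp_tendsto (c : ℝ) (hc : 0 < c) :
    Tendsto (fun σ : ℝ => Real.exp (-c / σ ^ 2)) (nhdsWithin 0 (Set.Ioi 0)) (nhds 0) := by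
  have h1 : Tendsto (fun σ : ℝ => σ⁻¹) (nhdsWithin 0 (Set.Ioi 0)) atTop :=
    tendsto_inv_nhdsGT_zero
  have h2 : Tendsto (fun σ : ℝ => σ⁻¹ * σ⁻¹) (nhdsWithin 0 (Set.Ioi 0)) atTop :=
    h1.atTop_mul_atTop₀ h1
  have h3 : Tendsto (fun σ : ℝ => c * (σ⁻¹ * σ⁻¹)) (nhdsWithin 0 (Set.Ioi 0)) atTop :=
    h2.const_mul_atTop hc
  have h4 : Tendsto (fun σ : ℝ => -(c * (σ⁻¹ * σ⁻¹))) (nhdsWithin 0 (Set.Ioi 0)) atBot :=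
    tendsto_neg_atTop_atBot.comp h3
  have h5 := Real.tendsto_exp_atBot.comp h4
  refine h5.congr fun σ => ?_
  simp only [Function.comp_apply]
  congr 1
  field_simp

end RatioAux

/-- For fixed `k`, `I1_k(σ)/I2_k(σ) → 0` as `σ → 0⁺`. -/
theorem ratio_tendsto_zero (k : ℕ) (hk : 0 < k) :
    Tendsto (fun σ : ℝ => I1 k σ / I2 k σ) (nhdsWithin 0 (Set.Ioi 0)) (nhds 0) := by
  rw [NormedAddCommGroup.tendsto_nhds_zero]
  intro ε hε
  set a : ℝ := min (ε / 2) 1 with ha_def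
  have ha : 0 < a := lt_min (by linarith) one_pos
  have ha1 : a ≤ 1 := min_le_right _ _
  have haε : a ≤ ε / 2 := min_le_left _ _
  set B : ℝ := (a / 2) ^ k / k with hB_def
  have hB : 0 < B := by
    apply div_pos (pow_pos (by linarith) k)
    exact_mod_cast hk
  have hc : 0 < 3 * a ^ 2 / 16 := by positivity
  have hev : ∀ᶠ σ : ℝ in nhdsWithin 0 (Set.Ioi 0),
      (1 / B) * Real.exp (-(3 * a ^ 2 / 16) / σ ^ 2) < ε / 2 := by
    have := (RatioAux.exp_tendsto _ hc).const_mul (1 / B)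
    rw [mul_zero] at this
    exact this.eventually_lt_const (by linarith)
  filter_upwards [hev, self_mem_nhdsWithin] with σ hσev hσpos
  have hσ : (0:ℝ) < σ := hσpos
  have hσ0 : σ ≠ 0 := hσ.ne'
  have hI2 : 0 < I2 k σ := RatioAux.I2_pos k σ
  have hI1 : 0 ≤ I1 k σ := RatioAux.I1_nonneg k σ
  have hle := RatioAux.I1_le k hk hσ0 ha ha1
  have hge := RatioAux.I2_ge k hk hσ0 ha ha1
  rw [Real.norm_eq_abs, abs_of_nonneg (div_nonneg hI1 hI2.le)]
  set T : ℝ := Real.exp (-a ^ 2 / (4 * σ ^ 2)) with hT_def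
  have hT : 0 < T := Real.exp_pos _
  set E2 : ℝ := Real.exp (-a ^ 2 / (16 * σ ^ 2)) with hE2_def
  have hE2 : 0 < E2 := Real.exp_pos _
  have step1 : I1 k σ / I2 k σ ≤ a + T / I2 k σ := by
    rw [div_le_iff₀ hI2]
    calc I1 k σ ≤ a * I2 k σ + T := hle
      _ = (a + T / I2 k σ) * I2 k σ := by field_simp
  have step2 : T / I2 k σ ≤ T / (B * E2) :=
    div_le_div_of_nonneg_left hT.le (mul_pos hB hE2) hge
  have step3 : T / (B * E2) = (1 / B) * Real.exp (-(3 * a ^ 2 / 16) / σ ^ 2) := by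
    have hexp : T / E2 = Real.exp (-(3 * a ^ 2 / 16) / σ ^ 2) := by
      rw [hT_def, hE2_def, ← Real.exp_sub]
      congr 1
      field_simp
      ring
    rw [div_mul_eq_div_div_swap, hexp]
    ring
  rw [step3] at step2
  calc I1 k σ / I2 k σ ≤ a + T / I2 k σ := step1
    _ < a + ε / 2 := by linarith
    _ ≤ ε := by linarith
end

section
/- Let k be a positive integer and let W_1, W_2, … be i.i.d. random vectors in ℝ^k whose common distribution has a density f with respect to Lebesgue measure satisfying: f(0) > 0 and f is locally Lipschitz at the origin, i.e., there exist L > 0 and δ > 0 with |f(x) − f(0)| ≤ L‖x‖ for all ‖x‖ ≤ δ. Let M_n := min_{1≤i≤n} ‖W_i‖. Then for every r > 0, lim_{n→∞} P( n·(M_n)^k > r ) = exp( −f(0)·V_{1,k}·r ), where V_{1,k} = π^{k/2}/Γ(k/2+1) is the volume of the unit ball in ℝ^k. That is, n·(M_n)^k converges in distribution to an exponential random variable with rate f(0)·V_{1,k}. -/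
open MeasureTheory ProbabilityTheory Real Filter

lemma aux_tendsto_one_sub_pow (a : ℕ → ℝ) (c : ℝ) (hpos : ∀ᶠ n in atTop, 0 < a n)
    (h : Tendsto (fun n : ℕ => (n : ℝ) * a n) atTop (nhds c)) :
    Tendsto (fun n => (1 - a n) ^ n) atTop (nhds (Real.exp (-c))) := by
  have ha0 : Tendsto a atTop (nhds 0) := by
    have h1 : Tendsto (fun n : ℕ => ((n : ℝ) * a n) * (n : ℝ)⁻¹) atTop (nhds (c * 0)) :=
      h.mul tendsto_inv_atTop_nhds_zero_nat
    rw [mul_zero] at h1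
    apply h1.congr'
    filter_upwards [eventually_gt_atTop 0] with n hn
    have : (n : ℝ) ≠ 0 := Nat.cast_ne_zero.2 hn.ne'
    field_simp
  have hderiv : HasDerivAt (fun x : ℝ => Real.log (1 - x)) (-1) 0 := by
    have h1 : HasDerivAt (fun x : ℝ => 1 - x) (-1) 0 := by
      simpa using (hasDerivAt_id (0:ℝ)).const_sub 1
    have h2 : HasDerivAt Real.log 1 (1 - 0) := by
      simpa using Real.hasDerivAt_log (by norm_num : (1:ℝ) - 0 ≠ 0)
    have h3 := h2.comp 0 h1
    rw [one_mul] at h3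
    exact h3
  have hslope := hasDerivAt_iff_tendsto_slope.1 hderiv
  have ha' : Tendsto a atTop (nhdsWithin 0 {(0:ℝ)}ᶜ) :=
    tendsto_nhdsWithin_of_tendsto_nhds_of_eventually_within _ ha0
      (hpos.mono fun n hn => by simp [hn.ne'])
  have hq : Tendsto (fun n => Real.log (1 - a n) / a n) atTop (nhds (-1)) := by
    have := hslope.comp ha'
    apply this.congr
    intro n
    simp [slope_def_field, div_eq_div_iff]
  have hmul : Tendsto (fun n : ℕ => (n : ℝ) * Real.log (1 - a n)) atTop (nhds (-c)) := by
    have h2 := h.mul hq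
    rw [show c * (-1) = -c by ring] at h2
    apply h2.congr'
    filter_upwards [hpos] with n hn
    field_simp
  have hfin : Tendsto (fun n : ℕ => Real.exp ((n : ℝ) * Real.log (1 - a n))) atTop
      (nhds (Real.exp (-c))) := (Real.continuous_exp.tendsto _).comp hmul
  apply hfin.congr'
  filter_upwards [ha0.eventually (gt_mem_nhds (by norm_num : (0:ℝ) < 1))] with n hn
  rw [Real.exp_nat_mul, Real.exp_log (by linarith)]

/-- Extreme-value behavior of the minimum norm of i.i.d. draws with a density that is
positive and locally Lipschitz at the origin: `n·(M_n)^k` converges in distribution to an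
exponential with rate `f(0)·V_{1,k}`, where `M_n = min_{1 ≤ i ≤ n} ‖W_i‖` and
`V_{1,k} = π^{k/2}/Γ(k/2+1)` is the volume of the unit ball in `ℝ^k`. -/
theorem min_norm_extreme_value
    (k : ℕ) (hk : 0 < k)
    {Ω : Type*} [MeasurableSpace Ω] (P : Measure Ω) [IsProbabilityMeasure P]
    (W : ℕ → Ω → EuclideanSpace ℝ (Fin k))
    (hmeas : ∀ i, Measurable (W i))
    (f : EuclideanSpace ℝ (Fin k) → ℝ) (hf : Measurable f) (hf0 : 0 < f 0)
    (L δ : ℝ) (hL : 0 < L) (hδ : 0 < δ)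
    (hLip : ∀ x : EuclideanSpace ℝ (Fin k), ‖x‖ ≤ δ → |f x - f 0| ≤ L * ‖x‖)
    (hlaw : ∀ i, Measure.map (W i) P =
      volume.withDensity (fun x => ENNReal.ofReal (f x)))
    (hindep : iIndepFun W P) :
    ∀ r : ℝ, 0 < r →
      Tendsto (fun n : ℕ =>
          (P {ω | (n : ℝ) * (⨅ i : Fin n, ‖W i ω‖) ^ k > r}).toReal)
        atTop
        (nhds (Real.exp (-(f 0 * (Real.pi ^ ((k : ℝ) / 2) / Real.Gamma ((k : ℝ) / 2 + 1)) * r)))) := by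
  intro r hr
  haveI : Nonempty (Fin k) := Fin.pos_iff_nonempty.1 hk
  set μ : Measure (EuclideanSpace ℝ (Fin k)) :=
    volume.withDensity (fun x => ENNReal.ofReal (f x)) with hμdef
  haveI hμprob : IsProbabilityMeasure μ := by
    rw [← hlaw 0]; exact Measure.isProbabilityMeasure_map (hmeas 0).aemeasurable
  set V : ℝ := Real.pi ^ ((k : ℝ) / 2) / Real.Gamma ((k : ℝ) / 2 + 1) with hVdef
  have hVpos : 0 < V := by
    apply div_pos (Real.rpow_pos_of_pos Real.pi_pos _)
    apply Real.Gamma_pos_of_pos; positivity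
  -- volume of closed balls
  have hVol : ∀ t : ℝ, 0 ≤ t →
      volume (Metric.closedBall (0 : EuclideanSpace ℝ (Fin k)) t)
        = ENNReal.ofReal (t ^ k * V) := by
    intro t ht
    rw [EuclideanSpace.volume_closedBall]
    have hcard : Fintype.card (Fin k) = k := Fintype.card_fin k
    rw [hcard]
    have hsq : Real.sqrt Real.pi ^ k = Real.pi ^ ((k : ℝ) / 2) := by
      rw [Real.sqrt_eq_rpow, ← Real.rpow_natCast (Real.pi ^ ((1:ℝ)/2)) k,
        ← Real.rpow_mul Real.pi_pos.le]
      rw [show (1:ℝ)/2 * k = (k:ℝ)/2 by ring]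
    rw [hsq, ← ENNReal.ofReal_pow ht, ← ENNReal.ofReal_mul (by positivity)]
  set p : ℝ → ℝ := fun t =>
    (μ (Metric.closedBall (0 : EuclideanSpace ℝ (Fin k)) t)).toReal with hpdef
  -- bounds on p
  have hpbd : ∀ t : ℝ, 0 ≤ t → t ≤ δ →
      (f 0 - L * t) * (t ^ k * V) ≤ p t ∧ p t ≤ (f 0 + L * t) * (t ^ k * V) := by
    intro t ht htδ
    have htV : (0:ℝ) ≤ t ^ k * V := by positivity
    have hμB : μ (Metric.closedBall (0 : EuclideanSpace ℝ (Fin k)) t)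
        = ∫⁻ x in Metric.closedBall (0 : EuclideanSpace ℝ (Fin k)) t,
            ENNReal.ofReal (f x) ∂volume := by
      rw [hμdef, withDensity_apply _ measurableSet_closedBall]
    have hbd : ∀ x ∈ Metric.closedBall (0 : EuclideanSpace ℝ (Fin k)) t,
        f 0 - L * t ≤ f x ∧ f x ≤ f 0 + L * t := by
      intro x hx
      rw [Metric.mem_closedBall, dist_zero_right] at hx
      have h1 := hLip x (hx.trans htδ)
      have h2 : L * ‖x‖ ≤ L * t := mul_le_mul_of_nonneg_left hx hL.le
      rw [abs_le] at h1
      constructor <;> linarith [h1.1, h1.2]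
    have h1 : ENNReal.ofReal (f 0 - L * t) * ENNReal.ofReal (t ^ k * V)
        ≤ μ (Metric.closedBall (0 : EuclideanSpace ℝ (Fin k)) t) := by
      rw [hμB, ← hVol t ht, ← setLIntegral_const]
      exact setLIntegral_mono hf.ennreal_ofReal
        (fun x hx => ENNReal.ofReal_le_ofReal (hbd x hx).1)
    have h2 : μ (Metric.closedBall (0 : EuclideanSpace ℝ (Fin k)) t)
        ≤ ENNReal.ofReal (f 0 + L * t) * ENNReal.ofReal (t ^ k * V) := by
      rw [hμB, ← hVol t ht, ← setLIntegral_const]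
      exact setLIntegral_mono measurable_const
        (fun x hx => ENNReal.ofReal_le_ofReal (hbd x hx).2)
    have hfin : μ (Metric.closedBall (0 : EuclideanSpace ℝ (Fin k)) t) ≠ ⊤ :=
      measure_ne_top μ _
    constructor
    · have := ENNReal.toReal_mono hfin h1
      rw [ENNReal.toReal_mul, ENNReal.toReal_ofReal htV, ENNReal.toReal_ofReal'] at this
      refine le_trans ?_ this
      exact mul_le_mul_of_nonneg_right (le_max_left _ _) htV
    · have := ENNReal.toReal_mono (by finiteness) h2
      rwa [ENNReal.toReal_mul, ENNReal.toReal_ofReal htV,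
        ENNReal.toReal_ofReal (by nlinarith)] at this
  -- the threshold sequence
  set t : ℕ → ℝ := fun n => (r / (n : ℝ)) ^ ((k : ℝ)⁻¹) with htdef
  have htk : ∀ n : ℕ, 1 ≤ n → (t n) ^ k = r / n := by
    intro n hn
    have hrn : (0:ℝ) ≤ r / n := div_nonneg hr.le (Nat.cast_nonneg n)
    rw [htdef, ← Real.rpow_natCast ((r / (n:ℝ)) ^ ((k:ℝ)⁻¹)) k, ← Real.rpow_mul hrn,
      inv_mul_cancel₀ (by exact_mod_cast hk.ne'), Real.rpow_one]
  have htpos : ∀ n : ℕ, 1 ≤ n → 0 < t n := by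
    intro n hn
    exact Real.rpow_pos_of_pos (div_pos hr (by exact_mod_cast hn)) _
  have ht0 : Tendsto t atTop (nhds 0) := by
    have hc : ContinuousAt (fun x : ℝ => x ^ ((k:ℝ)⁻¹)) 0 :=
      Real.continuousAt_rpow_const 0 _ (Or.inr (by positivity))
    have := hc.tendsto.comp (tendsto_const_div_atTop_nhds_zero_nat r)
    rw [Real.zero_rpow (show ((k:ℝ)⁻¹) ≠ 0 by positivity)] at this
    exact this
  -- key identity
  have hkey : ∀ n : ℕ, 1 ≤ n →
      (P {ω | (n : ℝ) * (⨅ i : Fin n, ‖W i ω‖) ^ k > r}).toReal = (1 - p (t n)) ^ n := by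
    intro n hn
    haveI : Nonempty (Fin n) := Fin.pos_iff_nonempty.1 hn
    have hn0 : (0:ℝ) < n := by exact_mod_cast hn
    have hS : MeasurableSet {x : EuclideanSpace ℝ (Fin k) | t n < ‖x‖} :=
      measurableSet_lt measurable_const measurable_norm
    have hset : {ω | (n : ℝ) * (⨅ i : Fin n, ‖W i ω‖) ^ k > r}
        = ⋂ i ∈ Finset.range n, (W i) ⁻¹' {x | t n < ‖x‖} := by
      ext ω
      simp only [Set.mem_setOf_eq, Set.mem_iInter, Set.mem_preimage, Finset.mem_range,
        gt_iff_lt]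
      set m := ⨅ i : Fin n, ‖W i ω‖ with hm
      have hmnn : 0 ≤ m := le_ciInf (fun i => norm_nonneg _)
      have step1 : r < (n : ℝ) * m ^ k ↔ t n < m := by
        rw [← div_lt_iff₀' hn0, ← htk n hn,
          pow_lt_pow_iff_left₀ (htpos n hn).le hmnn hk.ne']
      have step2 : t n < m ↔ ∀ i : Fin n, t n < ‖W i ω‖ := by
        constructor
        · intro h i
          exact lt_of_lt_of_le h (ciInf_le (Finite.bddBelow_range _) i)
        · intro h
          obtain ⟨i0, hi0⟩ := exists_eq_ciInf_of_finite (f := fun i : Fin n => ‖W i ω‖)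
          rw [hm, ← hi0]; exact h i0
      rw [step1, step2]
      exact ⟨fun h i hi => h ⟨i, hi⟩, fun h i => h i i.isLt⟩
    rw [hset, hindep.meas_biInter (fun i _ => ⟨_, hS, rfl⟩)]
    have hterm : ∀ i : ℕ, P ((W i) ⁻¹' {x | t n < ‖x‖})
        = 1 - μ (Metric.closedBall (0 : EuclideanSpace ℝ (Fin k)) (t n)) := by
      intro i
      have : P ((W i) ⁻¹' {x | t n < ‖x‖}) = μ {x | t n < ‖x‖} := by
        rw [← hlaw i, Measure.map_apply (hmeas i) hS]
      rw [this]
      have hcompl : {x : EuclideanSpace ℝ (Fin k) | t n < ‖x‖}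
          = (Metric.closedBall (0 : EuclideanSpace ℝ (Fin k)) (t n))ᶜ := by
        ext x; simp [Metric.mem_closedBall, dist_zero_right, not_le]
      rw [hcompl, measure_compl measurableSet_closedBall (measure_ne_top μ _),
        measure_univ]
    simp_rw [hterm]
    rw [Finset.prod_const, Finset.card_range, ENNReal.toReal_pow,
      ENNReal.toReal_sub_of_le prob_le_one ENNReal.one_ne_top, ENNReal.toReal_one]
  -- limit of n * p (t n)
  have hδev : ∀ᶠ n : ℕ in atTop, t n ≤ δ ∧ 1 ≤ n ∧ t n < f 0 / L := by
    have h1 := ht0.eventually (ge_mem_nhds hδ)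
    have h2 := ht0.eventually (gt_mem_nhds (div_pos hf0 hL))
    filter_upwards [h1, h2, eventually_ge_atTop 1] with n ha hb hc
    exact ⟨ha, hc, hb⟩
  have hna : Tendsto (fun n : ℕ => (n : ℝ) * p (t n)) atTop (nhds (f 0 * V * r)) := by
    have hlow : Tendsto (fun n : ℕ => (f 0 - L * t n) * (V * r)) atTop
        (nhds (f 0 * V * r)) := by
      have : Tendsto (fun n : ℕ => f 0 - L * t n) atTop (nhds (f 0)) := by
        have := ((tendsto_const_nhds (x := L)).mul ht0).const_sub (f 0)
        simpa using this
      have := this.mul_const (V * r)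
      simpa [mul_assoc] using this
    have hhigh : Tendsto (fun n : ℕ => (f 0 + L * t n) * (V * r)) atTop
        (nhds (f 0 * V * r)) := by
      have : Tendsto (fun n : ℕ => f 0 + L * t n) atTop (nhds (f 0)) := by
        have := ((tendsto_const_nhds (x := L)).mul ht0).const_add (f 0)
        simpa using this
      have := this.mul_const (V * r)
      simpa [mul_assoc] using this
    refine tendsto_of_tendsto_of_tendsto_of_le_of_le' hlow hhigh ?_ ?_
    · filter_upwards [hδev] with n ⟨hn1, hn2, _⟩
      obtain ⟨hl, _⟩ := hpbd (t n) (htpos n hn2).le hn1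
      have hb : (t n) ^ k = r / n := htk n hn2
      have hn0 : (0:ℝ) < n := by exact_mod_cast hn2
      calc (f 0 - L * t n) * (V * r)
          = (n:ℝ) * ((f 0 - L * t n) * ((t n)^k * V)) := by
            rw [hb]; field_simp
        _ ≤ (n:ℝ) * p (t n) := mul_le_mul_of_nonneg_left hl (Nat.cast_nonneg n)
    · filter_upwards [hδev] with n ⟨hn1, hn2, _⟩
      obtain ⟨_, hu⟩ := hpbd (t n) (htpos n hn2).le hn1
      have hb : (t n) ^ k = r / n := htk n hn2
      have hn0 : (0:ℝ) < n := by exact_mod_cast hn2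
      calc (n:ℝ) * p (t n)
          ≤ (n:ℝ) * ((f 0 + L * t n) * ((t n)^k * V)) :=
            mul_le_mul_of_nonneg_left hu (Nat.cast_nonneg n)
        _ = (f 0 + L * t n) * (V * r) := by
            rw [hb]; field_simp
  -- positivity of p (t n) eventually
  have hppos : ∀ᶠ n : ℕ in atTop, 0 < p (t n) := by
    filter_upwards [hδev] with n ⟨hn1, hn2, hn3⟩
    obtain ⟨hl, _⟩ := hpbd (t n) (htpos n hn2).le hn1
    have h1 : 0 < f 0 - L * t n := by
      rw [lt_div_iff₀ hL] at hn3; linarith [hn3]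
    have h2 : 0 < (t n) ^ k * V := by positivity
    nlinarith
  have hfinal := aux_tendsto_one_sub_pow (fun n => p (t n)) (f 0 * V * r) hppos hna
  apply hfinal.congr'
  filter_upwards [eventually_ge_atTop 1] with n hn
  exact (hkey n hn).symm
end
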